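/- Let n be an odd positive integer with prime factorization n = p_1^{J_1} p_2^{J_2} ··· p_s^{J_s}, where s ≥ 2, p_1 < p_2 < ··· < p_s are odd primes, each J_i ≥ 1, and for every r ∈ {1,...,s-1} one has ∏_{i=1}^{r} p_i^{J_i} < p_{r+1}. Let D_1 and D_2 be sets of divisors of n with n ∉ D_1 and n ∉ D_2. If the integral circulant graphs ICG(n,D_1) and ICG(n,D_2) are isospectral, then D_1 = D_2. -/

import Mathlib

open Finset

/-- `ω_n = exp(2πi/n)`. -/
noncomputable def omegaN (n : ℕ) : ℂ := Complex.exp (2 * Real.pi * Complex.I / n)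

/-- `λ_k(S) = ∑_{g ∈ S} ω_n^{k g}`, the eigenvalues of the circulant graph `Cay(ℤ_n, S)`. -/
noncomputable def lam (n : ℕ) (S : Finset ℕ) (k : ℕ) : ℂ :=
  ∑ g ∈ S, omegaN n ^ (k * g)

/-- The spectrum of `Cay(ℤ_n, S)`, i.e. the multiset `(λ_k(S))_{k ∈ [n]}`. -/
noncomputable def spec (n : ℕ) (S : Finset ℕ) : Multiset ℂ :=
  (Finset.Icc 1 n).val.map (lam n S)

/-- The connection set of `ICG(n, D)`:
`⋃_{d ∈ D} G_n(d) = {j ∈ [n] : gcd(j,n) ∈ D}` where `G_n(d) = {j ∈ [n] : gcd(j,n) = d}`. -/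
def connSet (n : ℕ) (D : Finset ℕ) : Finset ℕ :=
  (Finset.Icc 1 n).filter (fun j => Nat.gcd j n ∈ D)

lemma omegaN_prim (n : ℕ) (hn : n ≠ 0) : IsPrimitiveRoot (omegaN n) n :=
  Complex.isPrimitiveRoot_exp n hn

lemma omegaN_norm (n : ℕ) : ‖omegaN n‖ = 1 := by
  rw [omegaN, Complex.norm_exp]
  have : (2 * (Real.pi:ℂ) * Complex.I / n).re = 0 := by
    simp [Complex.div_re, Complex.mul_re, Complex.mul_im]
  rw [this, Real.exp_zero]

lemma geom_Icc (n : ℕ) (ζ : ℂ) (hζ : ζ ^ n = 1) :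
    ∑ k ∈ Icc 1 n, ζ ^ k = if ζ = 1 then (n : ℂ) else 0 := by
  by_cases h1 : ζ = 1
  · simp [h1, Nat.card_Icc]
  · simp only [h1, if_false]
    have key : ∑ k ∈ Icc 1 n, ζ ^ k = ∑ k ∈ range n, ζ ^ k := by
      have h2 : ∑ k ∈ range (n+1), ζ ^ k = ∑ k ∈ range n, ζ ^ k + ζ ^ n :=
        Finset.sum_range_succ _ n
      have h3 : ∑ k ∈ range (n+1), ζ ^ k = ζ ^ 0 + ∑ k ∈ Icc 1 n, ζ ^ k := by
        rw [Finset.range_eq_Ico, Finset.sum_eq_sum_Ico_succ_bot (Nat.succ_pos n)]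
        congr 1
      have := h2.symm.trans h3
      rw [pow_zero, hζ] at this
      linear_combination -this
    rw [key, geom_sum_eq h1, hζ]
    simp

lemma parseval (n : ℕ) (hn : n ≠ 0) (S : Finset ℕ) (hS : S ⊆ Icc 1 n) :
    ((spec n S).map (fun z => z * (starRingEnd ℂ) z)).sum = (n : ℂ) * S.card := by
  have hω : omegaN n ≠ 0 := (omegaN_prim n hn).ne_zero hn
  have hconj : (starRingEnd ℂ) (omegaN n) = (omegaN n)⁻¹ :=
    (Complex.inv_eq_conj (omegaN_norm n)).symm
  have hωn : omegaN n ^ n = 1 := (omegaN_prim n hn).pow_eq_one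
  have hsum : ((spec n S).map (fun z => z * (starRingEnd ℂ) z)).sum
      = ∑ k ∈ Icc 1 n, lam n S k * (starRingEnd ℂ) (lam n S k) := by
    rw [spec, Multiset.map_map]
    rfl
  rw [hsum]
  have hlam : ∀ k, lam n S k * (starRingEnd ℂ) (lam n S k)
      = ∑ g ∈ S, ∑ h ∈ S, (omegaN n ^ ((g:ℤ) - (h:ℤ))) ^ k := by
    intro k
    rw [lam, map_sum, Finset.sum_mul_sum]
    refine Finset.sum_congr rfl fun g _ => Finset.sum_congr rfl fun h _ => ?_
    rw [map_pow, hconj, inv_pow, ← zpow_natCast (omegaN n) (k*g),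
      ← zpow_natCast (omegaN n) (k*h), ← zpow_neg, ← zpow_add₀ hω,
      ← zpow_natCast (omegaN n ^ ((g:ℤ) - (h:ℤ))) k, ← zpow_mul]
    congr 1
    push_cast
    ring
  simp only [hlam]
  rw [Finset.sum_comm]
  have : ∀ g ∈ S, ∑ k ∈ Icc 1 n, ∑ h ∈ S, (omegaN n ^ ((g:ℤ) - (h:ℤ))) ^ k
      = (n : ℂ) := by
    intro g hg
    rw [Finset.sum_comm]
    have hgS := hS hg
    rw [Finset.mem_Icc] at hgS
    have : ∀ h ∈ S, ∑ k ∈ Icc 1 n, (omegaN n ^ ((g:ℤ) - (h:ℤ))) ^ k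
        = if h = g then (n:ℂ) else 0 := by
      intro h hh
      have hhS := hS hh
      rw [Finset.mem_Icc] at hhS
      rw [geom_Icc n _ (by rw [← zpow_natCast, ← zpow_mul, mul_comm ((g:ℤ)-(h:ℤ)), zpow_mul,
        zpow_natCast, hωn, one_zpow])]
      have hiff : (omegaN n ^ ((g:ℤ) - (h:ℤ)) = 1) ↔ h = g := by
        rw [(omegaN_prim n hn).zpow_eq_one_iff_dvd]
        constructor
        · intro hdvd
          have : (g:ℤ) - (h:ℤ) = 0 := by
            rcases hdvd with ⟨c, hc⟩
            have hglt : (g:ℤ) ≤ n := by exact_mod_cast hgS.2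
            have : -(n:ℤ) < (g:ℤ) - (h:ℤ) := by
              have : (h:ℤ) ≤ n := by exact_mod_cast hhS.2
              have h1 : (1:ℤ) ≤ g := by exact_mod_cast hgS.1
              omega
            have h2 : (g:ℤ) - (h:ℤ) < n := by
              have h1 : (1:ℤ) ≤ h := by exact_mod_cast hhS.1
              omega
            have hn0 : (0:ℤ) < n := by exact_mod_cast Nat.pos_of_ne_zero hn
            rcases lt_trichotomy c 0 with hcc | hcc | hcc
            · nlinarith
            · rw [hcc, mul_zero] at hc; exact hc
            · nlinarith
          have : (g:ℤ) = h := by omega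
          exact_mod_cast this.symm
        · rintro rfl; simp
      rw [if_congr hiff rfl rfl]
    rw [Finset.sum_congr rfl this]
    simp [Finset.sum_ite_eq' S g, hg]
  rw [Finset.sum_congr rfl this, Finset.sum_const, nsmul_eq_mul, mul_comm]

lemma card_connSet (n : ℕ) (hn : n ≠ 0) (D : Finset ℕ) (hD : D ⊆ n.divisors)
    (hnD : n ∉ D) : (connSet n D).card = ∑ d ∈ D, Nat.totient (n / d) := by
  have hdisj : (D : Set ℕ).PairwiseDisjoint
      (fun d => (Finset.Icc 1 n).filter (fun j => Nat.gcd j n = d)) := by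
    intro a _ b _ hab
    simp only [Finset.disjoint_left, Finset.mem_filter]
    rintro x ⟨_, rfl⟩ ⟨_, h⟩
    exact hab h
  have hsplit : connSet n D
      = D.biUnion (fun d => (Finset.Icc 1 n).filter (fun j => Nat.gcd j n = d)) := by
    ext j
    simp only [connSet, Finset.mem_filter, Finset.mem_biUnion]
    constructor
    · rintro ⟨hj, hgd⟩; exact ⟨_, hgd, hj, rfl⟩
    · rintro ⟨d, hd, hj, rfl⟩; exact ⟨hj, hd⟩
  rw [hsplit, Finset.card_biUnion (fun a ha b hb hab => hdisj ha hb hab)]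
  refine Finset.sum_congr rfl fun d hd => ?_
  have hdvd : d ∣ n := (Nat.mem_divisors.mp (hD hd)).1
  have hdn : d ≠ n := fun h => hnD (h ▸ hd)
  rw [Nat.totient_div_of_dvd hdvd]
  congr 1
  ext j
  simp only [Finset.mem_filter, Finset.mem_Icc, Finset.mem_range]
  constructor
  · rintro ⟨⟨h1, h2⟩, hg⟩
    refine ⟨?_, by rw [Nat.gcd_comm]; exact hg⟩
    rcases h2.lt_or_eq with h | rfl
    · exact h
    · exact absurd (by rwa [Nat.gcd_self] at hg) (Ne.symm hdn)
  · rintro ⟨h1, hg⟩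
    rw [Nat.gcd_comm] at hg
    refine ⟨⟨?_, h1.le⟩, hg⟩
    rcases Nat.eq_zero_or_pos j with rfl | h
    · rw [Nat.gcd_zero_left] at hg; exact absurd hg.symm hdn
    · exact h

/-- Superincreasing property of totients over divisors. -/
def SIprop (n : ℕ) : Prop :=
  ∀ e ∈ n.divisors, 1 < e →
    ∑ e' ∈ n.divisors.filter (· < e), Nat.totient e' < Nat.totient e

lemma SI_one : SIprop 1 := by
  intro e he h1
  simp [Nat.divisors_one] at he
  omega

lemma sum_divisors_coprime_mul {M : Type*} [AddCommMonoid M] (m q : ℕ) (hm : m ≠ 0)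
    (hq : q ≠ 0) (hcop : Nat.Coprime m q) (f : ℕ → M) :
    ∑ e ∈ (m * q).divisors, f e = ∑ d ∈ m.divisors, ∑ c ∈ q.divisors, f (d * c) := by
  rw [← Finset.sum_product']
  refine Finset.sum_nbij' (fun (e:ℕ) => (Nat.gcd e m, Nat.gcd e q)) (fun x => x.1 * x.2) ?_ ?_ ?_ ?_ ?_
  · intro e he
    rw [Nat.mem_divisors] at he
    simp only [Finset.mem_product, Nat.mem_divisors]
    exact ⟨⟨Nat.gcd_dvd_right e m, hm⟩, ⟨Nat.gcd_dvd_right e q, hq⟩⟩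
  · intro x hx
    simp only [Finset.mem_product, Nat.mem_divisors] at hx
    rw [Nat.mem_divisors]
    exact ⟨mul_dvd_mul hx.1.1 hx.2.1, mul_ne_zero hm hq⟩
  · intro e he
    rw [Nat.mem_divisors] at he
    exact (Nat.gcd_mul_gcd_eq_iff_dvd_mul_of_coprime hcop).mpr he.1
  · intro x hx
    simp only [Finset.mem_product, Nat.mem_divisors] at hx
    obtain ⟨⟨hd, _⟩, ⟨hc, _⟩⟩ := hx
    have h1 : (x.1 * x.2).gcd m = x.1 := by
      have hx2 : Nat.Coprime x.2 m := ((Nat.Coprime.symm hcop).coprime_dvd_left hc)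
      rw [Nat.Coprime.gcd_mul_right_cancel x.1 hx2, Nat.gcd_eq_left hd]
    have h2 : (x.1 * x.2).gcd q = x.2 := by
      have hx1 : Nat.Coprime x.1 q := (hcop.coprime_dvd_left hd)
      rw [Nat.Coprime.gcd_mul_left_cancel x.2 hx1, Nat.gcd_eq_left hc]
    simp [h1, h2]
  · intro e he
    rw [Nat.mem_divisors] at he
    rw [(Nat.gcd_mul_gcd_eq_iff_dvd_mul_of_coprime hcop).mpr he.1]

lemma SI_step (m p J : ℕ) (hm : m ≠ 0) (hp : p.Prime) (hmp : m + 1 < p) (hJ : 1 ≤ J)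
    (IH : SIprop m) : SIprop (m * p ^ J) := by
  have hpm : ¬ p ∣ m := fun h => absurd (Nat.le_of_dvd (Nat.pos_of_ne_zero hm) h) (by omega)
  have hcop : Nat.Coprime m (p ^ J) := ((hp.coprime_iff_not_dvd.mpr hpm).symm).pow_right J
  have hppos : 0 < p := hp.pos
  have hpJ : p ^ J ≠ 0 := (pow_pos hppos J).ne'
  have hN : m * p ^ J ≠ 0 := mul_ne_zero hm hpJ
  have hmpos : 0 < m := Nat.pos_of_ne_zero hm
  intro e he h1e
  have hedvd : e ∣ m * p ^ J := (Nat.mem_divisors.mp he).1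
  set d := e.gcd m with hd_def
  have hd : d ∣ m := Nat.gcd_dvd_right e m
  have hqd : e.gcd (p ^ J) ∣ p ^ J := Nat.gcd_dvd_right e (p ^ J)
  obtain ⟨b, hbJ, hb⟩ := (Nat.dvd_prime_pow hp).mp hqd
  have hdq : d * p ^ b = e := by
    rw [← hb]; exact (Nat.gcd_mul_gcd_eq_iff_dvd_mul_of_coprime hcop).mpr hedvd
  have hdpos : 0 < d := Nat.pos_of_dvd_of_pos hd hmpos
  have hdm : d ≤ m := Nat.le_of_dvd hmpos hd
  -- ordering lemma
  have horder : ∀ d' b', d' ∈ m.divisors → b' ≤ J →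
      (d' * p ^ b' < e ↔ b' < b ∨ (b' = b ∧ d' < d)) := by
    intro d' b' hd' hb'
    have hd'm : d' ≤ m := Nat.le_of_dvd hmpos (Nat.mem_divisors.mp hd').1
    have hd'pos : 0 < d' := Nat.pos_of_mem_divisors hd'
    rw [← hdq]
    constructor
    · intro hlt
      rcases lt_trichotomy b' b with h | h | h
      · exact Or.inl h
      · subst h
        exact Or.inr ⟨rfl, lt_of_mul_lt_mul_right hlt (Nat.zero_le _)⟩
      · exfalso
        have h1 : d * p ^ b ≤ m * p ^ b := Nat.mul_le_mul_right _ hdm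
        have h2 : m * p ^ b < p ^ (b + 1) := by
          rw [pow_succ, mul_comm (p^b) p]
          exact (Nat.mul_lt_mul_right (pow_pos hppos b)).mpr (by omega)
        have h3 : p ^ (b + 1) ≤ p ^ b' := Nat.pow_le_pow_right hppos h
        have h4 : p ^ b' ≤ d' * p ^ b' := Nat.le_mul_of_pos_left _ hd'pos
        omega
    · rintro (h | ⟨hbb, h⟩)
      · have h1 : d' * p ^ b' ≤ m * p ^ b' := Nat.mul_le_mul_right _ hd'm
        have h2 : m * p ^ b' < p ^ (b' + 1) := by
          rw [pow_succ, mul_comm (p^b') p]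
          exact (Nat.mul_lt_mul_right (pow_pos hppos b')).mpr (by omega)
        have h3 : p ^ (b' + 1) ≤ p ^ b := Nat.pow_le_pow_right hppos h
        have h4 : p ^ b ≤ d * p ^ b := Nat.le_mul_of_pos_left _ hdpos
        omega
      · subst hbb
        exact (Nat.mul_lt_mul_right (pow_pos hppos _)).mpr h
  -- rewrite the sum
  have hsum : ∑ e' ∈ (m * p ^ J).divisors.filter (· < e), Nat.totient e'
      = ∑ b' ∈ range (J + 1), ∑ d' ∈ m.divisors,
          (if d' * p ^ b' < e then Nat.totient (d' * p ^ b') else 0) := by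
    rw [Finset.sum_filter,
      sum_divisors_coprime_mul m (p ^ J) hm hpJ hcop
        (fun e' => if e' < e then Nat.totient e' else 0)]
    rw [Finset.sum_congr rfl fun d' _ => Nat.sum_divisors_prime_pow hp, Finset.sum_comm]
  set T := ∑ d' ∈ m.divisors.filter (· < d), Nat.totient d' with hT_def
  have hcop' : ∀ d' ∈ m.divisors, ∀ b' ≤ J, Nat.Coprime d' (p ^ b') := fun d' hd' b' hb' =>
    (hcop.coprime_dvd_left (Nat.mem_divisors.mp hd').1).coprime_dvd_right
      (pow_dvd_pow p hb')
  -- evaluate the three ranges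
  have h_lt : ∀ b' ∈ range b, (∑ d' ∈ m.divisors,
      (if d' * p ^ b' < e then Nat.totient (d' * p ^ b') else 0))
      = m * Nat.totient (p ^ b') := by
    intro b' hb'
    rw [Finset.mem_range] at hb'
    have hb'J : b' ≤ J := le_trans (le_of_lt hb') hbJ
    rw [Finset.sum_congr rfl fun d' hd' => if_pos ((horder d' b' hd' hb'J).mpr (Or.inl hb'))]
    rw [Finset.sum_congr rfl fun d' hd' => Nat.totient_mul (hcop' d' hd' b' hb'J)]
    rw [← Finset.sum_mul, Nat.sum_totient]
  have h_eq : (∑ d' ∈ m.divisors,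
      (if d' * p ^ b < e then Nat.totient (d' * p ^ b) else 0))
      = T * Nat.totient (p ^ b) := by
    have : ∀ d' ∈ m.divisors, (if d' * p ^ b < e then Nat.totient (d' * p ^ b) else 0)
        = if d' < d then Nat.totient (d' * p ^ b) else 0 := by
      intro d' hd'
      by_cases h : d' < d
      · rw [if_pos ((horder d' b hd' hbJ).mpr (Or.inr ⟨rfl, h⟩)), if_pos h]
      · rw [if_neg, if_neg h]
        rw [horder d' b hd' hbJ]
        push_neg
        exact ⟨le_refl b, fun _ => le_of_not_gt h⟩
    rw [Finset.sum_congr rfl this, ← Finset.sum_filter]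
    rw [Finset.sum_congr rfl fun d' hd' => Nat.totient_mul
      (hcop' d' (Finset.mem_of_mem_filter d' hd') b hbJ), ← Finset.sum_mul]
  have h_gt : ∀ b' ∈ Finset.Ico (b+1) (J+1), (∑ d' ∈ m.divisors,
      (if d' * p ^ b' < e then Nat.totient (d' * p ^ b') else 0)) = 0 := by
    intro b' hb'
    rw [Finset.mem_Ico] at hb'
    refine Finset.sum_eq_zero fun d' hd' => if_neg ?_
    rw [horder d' b' hd' (by omega)]
    push_neg
    exact ⟨by omega, fun h => by omega⟩
  -- combine
  have hsplit : ∑ b' ∈ range (J + 1), ∑ d' ∈ m.divisors,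
      (if d' * p ^ b' < e then Nat.totient (d' * p ^ b') else 0)
      = (∑ b' ∈ range b, m * Nat.totient (p ^ b')) + T * Nat.totient (p ^ b) := by
    rw [Finset.range_eq_Ico, ← Finset.sum_Ico_consecutive _ (Nat.zero_le b) (by omega : b ≤ J + 1),
      Finset.sum_eq_sum_Ico_succ_bot (by omega : b < J + 1)]
    rw [Finset.sum_congr rfl h_gt] at *
    rw [h_eq, Finset.sum_const_zero, add_zero, ← Finset.range_eq_Ico,
      Finset.sum_congr rfl h_lt]
  rw [hsum, hsplit]
  -- the inequality
  have hcopd : Nat.Coprime d (p ^ b) := hcop' d (Nat.mem_divisors.mpr ⟨hd, hm⟩) b hbJ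
  rw [← hdq, Nat.totient_mul hcopd]
  have hTle : T + 1 ≤ Nat.totient d := by
    rcases Nat.lt_or_ge 1 d with h1d | h1d
    · exact IH d (Nat.mem_divisors.mpr ⟨hd, hm⟩) h1d
    · have hd1 : d = 1 := by omega
      have : T = 0 := by
        rw [hT_def, Finset.sum_eq_zero]
        intro d' hd'
        rw [Finset.mem_filter] at hd'
        have := Nat.pos_of_mem_divisors hd'.1
        omega
      rw [this, hd1, Nat.totient_one]
  rcases Nat.eq_zero_or_pos b with rfl | hbpos
  · -- b = 0 : e = d, need T < φ d
    simp only [Finset.range_zero, Finset.sum_empty, pow_zero, Nat.totient_one, mul_one, zero_add]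
    have h1d : 1 < d := by rw [← hdq, pow_zero, mul_one] at h1e; exact h1e
    exact IH d (Nat.mem_divisors.mpr ⟨hd, hm⟩) h1d
  · -- b ≥ 1
    have hSig : ∑ b' ∈ range b, Nat.totient (p ^ b') = p ^ (b - 1) := by
      have : b - 1 + 1 = b := by omega
      rw [← this, ← Nat.sum_divisors_prime_pow hp, Nat.sum_totient, Nat.add_sub_cancel]
    rw [← Finset.mul_sum, hSig]
    have hstep : m * p ^ (b - 1) < Nat.totient (p ^ b) := by
      rw [Nat.totient_prime_pow hp hbpos]
      have : m < p - 1 := by omega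
      calc m * p ^ (b - 1) < (p - 1) * p ^ (b - 1) :=
        (Nat.mul_lt_mul_right (pow_pos hppos _)).mpr this
      _ = p ^ (b - 1) * (p - 1) := mul_comm _ _
    calc m * p ^ (b - 1) + T * Nat.totient (p ^ b)
        < Nat.totient (p ^ b) + T * Nat.totient (p ^ b) := by omega
      _ = (T + 1) * Nat.totient (p ^ b) := by ring
      _ ≤ Nat.totient d * Nat.totient (p ^ b) := Nat.mul_le_mul_right _ hTle

lemma sums_aux (n : ℕ) (hSI : SIprop n) (A B : Finset ℕ)
    (hA : A ⊆ n.divisors) (hB : B ⊆ n.divisors) (m : ℕ) (hmA : m ∈ A) (hmB : m ∉ B)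
    (hmax : ∀ x ∈ B, x ∉ A → x < m)
    (hsum : ∑ e ∈ A, Nat.totient e = ∑ e ∈ B, Nat.totient e) : False := by
  have hsA : ∑ e ∈ A ∩ B, Nat.totient e + ∑ e ∈ A \ B, Nat.totient e
      = ∑ e ∈ A, Nat.totient e := Finset.sum_inter_add_sum_sdiff A B _
  have hsB : ∑ e ∈ B ∩ A, Nat.totient e + ∑ e ∈ B \ A, Nat.totient e
      = ∑ e ∈ B, Nat.totient e := Finset.sum_inter_add_sum_sdiff B A _
  rw [Finset.inter_comm] at hsB
  have hdiff : ∑ e ∈ A \ B, Nat.totient e = ∑ e ∈ B \ A, Nat.totient e := by omega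
  have hmem : m ∈ A \ B := Finset.mem_sdiff.mpr ⟨hmA, hmB⟩
  have hmlow : Nat.totient m ≤ ∑ e ∈ A \ B, Nat.totient e :=
    Finset.single_le_sum (fun i _ => Nat.zero_le _) hmem
  have hmdvd : m ∈ n.divisors := hA hmA
  have hmpos : 0 < m := Nat.pos_of_mem_divisors hmdvd
  have hsub : B \ A ⊆ n.divisors.filter (· < m) := by
    intro x hx
    rw [Finset.mem_sdiff] at hx
    exact Finset.mem_filter.mpr ⟨hB hx.1, hmax x hx.1 hx.2⟩
  have hup : ∑ e ∈ B \ A, Nat.totient e ≤ ∑ e ∈ n.divisors.filter (· < m), Nat.totient e :=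
    Finset.sum_le_sum_of_subset hsub
  rcases Nat.lt_or_ge 1 m with h1m | h1m
  · have := hSI m hmdvd h1m
    omega
  · have hm1 : m = 1 := by omega
    have hBA : ∑ e ∈ B \ A, Nat.totient e = 0 := by
      refine Finset.sum_eq_zero fun x hx => absurd (hsub hx) ?_
      rw [hm1]
      simp only [Finset.mem_filter]
      rintro ⟨hx1, hx2⟩
      have := Nat.pos_of_mem_divisors hx1
      omega
    have : 0 < Nat.totient m := Nat.totient_pos.mpr hmpos
    omega

lemma sums_inj (n : ℕ) (hSI : SIprop n) (E₁ E₂ : Finset ℕ)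
    (h₁ : E₁ ⊆ n.divisors) (h₂ : E₂ ⊆ n.divisors)
    (hsum : ∑ e ∈ E₁, Nat.totient e = ∑ e ∈ E₂, Nat.totient e) : E₁ = E₂ := by
  by_contra hne
  rcases ((E₁ \ E₂) ∪ (E₂ \ E₁)).eq_empty_or_nonempty with h | h
  · rw [Finset.union_eq_empty, Finset.sdiff_eq_empty_iff_subset,
      Finset.sdiff_eq_empty_iff_subset] at h
    exact hne (Finset.Subset.antisymm h.1 h.2)
  · set m := ((E₁ \ E₂) ∪ (E₂ \ E₁)).max' h with hm_def
    have hm := Finset.max'_mem _ h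
    rw [Finset.mem_union] at hm
    rcases hm with hm | hm
    · rw [Finset.mem_sdiff] at hm
      refine sums_aux n hSI E₁ E₂ h₁ h₂ m hm.1 hm.2 (fun x hx hxn => ?_) hsum
      have hxle : x ≤ m := Finset.le_max' _ x
        (Finset.mem_union_right _ (Finset.mem_sdiff.mpr ⟨hx, hxn⟩))
      have : x ≠ m := fun hxm => hm.2 (by rwa [hxm] at hx)
      omega
    · rw [Finset.mem_sdiff] at hm
      refine sums_aux n hSI E₂ E₁ h₂ h₁ m hm.1 hm.2 (fun x hx hxn => ?_) hsum.symm
      have hxle : x ≤ m := Finset.le_max' _ x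
        (Finset.mem_union_left _ (Finset.mem_sdiff.mpr ⟨hx, hxn⟩))
      have : x ≠ m := fun hxm => hm.2 (by rwa [hxm] at hx)
      omega

/-- So's conjecture for odd `n = p₁^{J₁} ⋯ p_s^{J_s}` where the partial products satisfy
`∏_{i ≤ r} p_i^{J_i} < p_{r+1}`. -/
theorem so_odd_type
    (n s : ℕ) (p J : ℕ → ℕ)
    (hodd : Odd n) (hs : 2 ≤ s)
    (hp : ∀ i < s, (p i).Prime ∧ Odd (p i))
    (hJ : ∀ i < s, 1 ≤ J i)
    (hmono : ∀ i j, i < j → j < s → p i < p j)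
    (hfact : n = ∏ i ∈ Finset.range s, p i ^ J i)
    (hsep : ∀ r, 1 ≤ r → r < s → ∏ i ∈ Finset.range r, p i ^ J i < p r)
    (D₁ D₂ : Finset ℕ)
    (hD₁ : D₁ ⊆ n.divisors) (hD₂ : D₂ ⊆ n.divisors)
    (hn₁ : n ∉ D₁) (hn₂ : n ∉ D₂)
    (hspec : spec n (connSet n D₁) = spec n (connSet n D₂)) :
    D₁ = D₂ := by
  have hn0 : n ≠ 0 := by rcases hodd with ⟨k, hk⟩; omega
  -- step 1: equal cardinalities of connection sets
  have hcard : (connSet n D₁).card = (connSet n D₂).card := by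
    have h0 : ((spec n (connSet n D₁)).map (fun z => z * (starRingEnd ℂ) z)).sum
        = ((spec n (connSet n D₂)).map (fun z => z * (starRingEnd ℂ) z)).sum := by
      rw [hspec]
    rw [parseval n hn0 (connSet n D₁) (Finset.filter_subset _ _),
      parseval n hn0 (connSet n D₂) (Finset.filter_subset _ _)] at h0
    have := mul_left_cancel₀ (show (n:ℂ) ≠ 0 from Nat.cast_ne_zero.mpr hn0) h0
    exact_mod_cast this
  rw [card_connSet n hn0 D₁ hD₁ hn₁, card_connSet n hn0 D₂ hD₂ hn₂] at hcard
  -- step 2: superincreasing property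
  have hSI : SIprop n := by
    have key : ∀ r, r ≤ s → SIprop (∏ i ∈ Finset.range r, p i ^ J i) ∧
        Odd (∏ i ∈ Finset.range r, p i ^ J i) := by
      intro r
      induction r with
      | zero => intro _; refine ⟨by rw [Finset.prod_range_zero]; exact SI_one, by simp⟩
      | succ r ih =>
        intro hr
        obtain ⟨ihSI, ihodd⟩ := ih (by omega)
        have hpr := hp r (by omega)
        have hodd' : Odd (∏ i ∈ Finset.range (r+1), p i ^ J i) := by
          rw [Finset.prod_range_succ]; exact ihodd.mul (hpr.2.pow)
        refine ⟨?_, hodd'⟩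
        rw [Finset.prod_range_succ]
        have hm0 : (∏ i ∈ Finset.range r, p i ^ J i) ≠ 0 := by
          rcases ihodd with ⟨k, hk⟩; omega
        have hlt : (∏ i ∈ Finset.range r, p i ^ J i) < p r := by
          rcases Nat.eq_zero_or_pos r with rfl | hrpos
          · simpa using hpr.1.one_lt
          · exact hsep r hrpos (by omega)
        have hmp1 : (∏ i ∈ Finset.range r, p i ^ J i) + 1 < p r := by
          have h2 := hpr.2
          rw [Nat.odd_iff] at h2
          have h3 := ihodd
          rw [Nat.odd_iff] at h3
          omega
        exact SI_step _ _ _ hm0 hpr.1 hmp1 (hJ r (by omega)) ihSI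
    have := (key s le_rfl).1
    rwa [← hfact] at this
  -- step 3: transfer to images under n / ·
  have himg : ∀ (D : Finset ℕ), D ⊆ n.divisors →
      ∑ e ∈ D.image (n / ·), Nat.totient e = ∑ d ∈ D, Nat.totient (n / d) := by
    intro D hD
    refine Finset.sum_image fun d hd d' hd' hdd => ?_
    have h1 : d ∣ n := (Nat.mem_divisors.mp (hD hd)).1
    have h2 : d' ∣ n := (Nat.mem_divisors.mp (hD hd')).1
    rw [← Nat.div_div_self h1 hn0, hdd, Nat.div_div_self h2 hn0]
  have hsub : ∀ (D : Finset ℕ), D ⊆ n.divisors → D.image (n / ·) ⊆ n.divisors := by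
    intro D hD x hx
    rw [Finset.mem_image] at hx
    obtain ⟨d, hd, rfl⟩ := hx
    have h1 : d ∣ n := (Nat.mem_divisors.mp (hD hd)).1
    exact Nat.mem_divisors.mpr ⟨⟨d, (Nat.div_mul_cancel h1).symm⟩, hn0⟩
  have hE : D₁.image (n / ·) = D₂.image (n / ·) := by
    refine sums_inj n hSI _ _ (hsub D₁ hD₁) (hsub D₂ hD₂) ?_
    rw [himg D₁ hD₁, himg D₂ hD₂]
    exact hcard
  -- step 4: conclude
  have hback : ∀ (A B : Finset ℕ), A ⊆ n.divisors → B ⊆ n.divisors →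
      A.image (n / ·) = B.image (n / ·) → ∀ d ∈ A, d ∈ B := by
    intro A B hA hB hAB d hd
    have h1 : d ∣ n := (Nat.mem_divisors.mp (hA hd)).1
    have : n / d ∈ B.image (n / ·) := hAB ▸ Finset.mem_image_of_mem _ hd
    rw [Finset.mem_image] at this
    obtain ⟨d', hd', hdd⟩ := this
    have h2 : d' ∣ n := (Nat.mem_divisors.mp (hB hd')).1
    have : d' = d := by rw [← Nat.div_div_self h2 hn0, hdd, Nat.div_div_self h1 hn0]
    rwa [← this]
  exact Finset.Subset.antisymm (fun d hd => hback D₁ D₂ hD₁ hD₂ hE d hd)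
    (fun d hd => hback D₂ D₁ hD₂ hD₁ hE.symm d hd)
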